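/- arXiv:2410.23995 — 3 statements merged into one kernel-verified Lean document; each statement's English description precedes it below -/
import Mathlib

section
/- Let μ be a nonnegative measure on ℝ^k, c > 0, δ ∈ (0, 1/2), and t ∈ (0,T]. Then ∫₀^t (t−s)^(−2δ) ∫_{ℝ^k} exp(−c(t−s)|ξ|²) μ(dξ) ds ≤ C ∫_{ℝ^k} (1+|ξ|²)^(2δ−1) μ(dξ), for a constant C depending only on c, δ, T. -/
open MeasureTheory Set ENNReal Real

theorem keylem (c T : ℝ) (hc : 0 < c) (hT : 0 < T) (δ : ℝ)
    (hδ : δ ∈ Set.Ioo (0:ℝ) (1/2)) (a : ℝ) (ha : 0 ≤ a) (t : ℝ) (ht : t ∈ Set.Ioc (0:ℝ) T) :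
    (∫⁻ s in Set.Ioc (0:ℝ) t,
        ENNReal.ofReal ((t - s) ^ (-(2*δ))) * ENNReal.ofReal (Real.exp (-c * (t - s) * a)))
      ≤ ENNReal.ofReal (Real.exp (c*T) * c ^ (2*δ-1) * Real.Gamma (1-2*δ))
          * ENNReal.ofReal ((1 + a) ^ (2*δ - 1)) := by
  obtain ⟨hδ0, hδ2⟩ := hδ
  obtain ⟨ht0, htT⟩ := ht
  set lam : ℝ := c * (1 + a) with hlam
  have h1a : (0:ℝ) < 1 + a := by linarith
  have hlam0 : 0 < lam := by positivity
  have hG : 0 < Real.Gamma (1-2*δ) := Real.Gamma_pos_of_pos (by linarith)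
  -- step 1: pointwise bound
  have step1 : (∫⁻ s in Set.Ioc (0:ℝ) t,
        ENNReal.ofReal ((t - s) ^ (-(2*δ))) * ENNReal.ofReal (Real.exp (-c * (t - s) * a)))
      ≤ ∫⁻ s in Set.Ioc (0:ℝ) t,
        ENNReal.ofReal (Real.exp (c*T)) *
          ENNReal.ofReal ((t - s) ^ (-(2*δ)) * Real.exp (-(lam * (t-s)))) := by
    refine setLIntegral_mono_ae (by fun_prop) ?_
    filter_upwards [] with s
    intro hs
    have h1 : (0:ℝ) ≤ t - s := by linarith [hs.2]
    rw [← ENNReal.ofReal_mul (by positivity), ← ENNReal.ofReal_mul (Real.exp_nonneg _)]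
    apply ENNReal.ofReal_le_ofReal
    have h2 : Real.exp (-c * (t-s) * a) ≤ Real.exp (c*T) * Real.exp (-(lam * (t-s))) := by
      rw [← Real.exp_add]
      apply Real.exp_le_exp.2
      have h3 : c * (t - s) ≤ c * T := by nlinarith [hs.1]
      nlinarith [hs.1]
    calc (t - s) ^ (-(2*δ)) * Real.exp (-c * (t-s) * a)
        ≤ (t - s) ^ (-(2*δ)) * (Real.exp (c*T) * Real.exp (-(lam * (t-s)))) :=
          mul_le_mul_of_nonneg_left h2 (by positivity)
      _ = Real.exp (c*T) * ((t - s) ^ (-(2*δ)) * Real.exp (-(lam * (t-s)))) := by ring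
  -- step 2: substitution u = t - s
  have step2 : (∫⁻ s in Set.Ioc (0:ℝ) t,
        ENNReal.ofReal ((t - s) ^ (-(2*δ)) * Real.exp (-(lam * (t-s)))))
      = ∫⁻ u in Set.Ico (0:ℝ) t, ENNReal.ofReal (u ^ (-(2*δ)) * Real.exp (-(lam * u))) := by
    have hpre : (fun s : ℝ => t - s) ⁻¹' (Set.Ico (0:ℝ) t) = Set.Ioc (0:ℝ) t := by
      ext s
      simp only [Set.mem_preimage, Set.mem_Ico, Set.mem_Ioc]
      constructor <;> rintro ⟨p, q⟩ <;> exact ⟨by linarith, by linarith⟩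
    rw [← hpre]
    exact (Measure.measurePreserving_sub_left volume t).setLIntegral_comp_preimage
      (f := fun u => ENNReal.ofReal (u ^ (-(2*δ)) * Real.exp (-(lam * u))))
      measurableSet_Ico
      (((measurable_id.pow measurable_const).mul
          (Real.measurable_exp.comp ((measurable_const.mul measurable_id).neg))).ennreal_ofReal)
  -- step 3: extend to Ioi 0 and evaluate
  have step3 : (∫⁻ u in Set.Ico (0:ℝ) t, ENNReal.ofReal (u ^ (-(2*δ)) * Real.exp (-(lam * u))))
      ≤ ENNReal.ofReal ((1/lam) ^ (1-2*δ) * Real.Gamma (1-2*δ)) := by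
    have hmono : (∫⁻ u in Set.Ico (0:ℝ) t, ENNReal.ofReal (u ^ (-(2*δ)) * Real.exp (-(lam * u))))
        ≤ ∫⁻ u in Set.Ioi (0:ℝ), ENNReal.ofReal (u ^ (-(2*δ)) * Real.exp (-(lam * u))) := by
      rw [Measure.restrict_congr_set Ico_ae_eq_Ioc]
      exact lintegral_mono_set (fun x hx => hx.1)
    refine hmono.trans ?_
    have hint : IntegrableOn (fun u : ℝ => u ^ (-(2*δ)) * Real.exp (-(lam * u))) (Set.Ioi 0) := by
      have := integrableOn_rpow_mul_exp_neg_mul_rpow (s := -(2*δ)) (p := 1) (b := lam)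
        (by linarith) zero_lt_one hlam0
      exact this.congr_fun (fun x hx => by beta_reduce; rw [Real.rpow_one, neg_mul]) measurableSet_Ioi
    rw [← ofReal_integral_eq_lintegral_ofReal hint]
    · apply ENNReal.ofReal_le_ofReal
      rw [show (∫ u in Set.Ioi (0:ℝ), u ^ (-(2*δ)) * Real.exp (-(lam * u)))
          = ∫ u in Set.Ioi (0:ℝ), u ^ ((1-2*δ) - 1) * Real.exp (-(lam * u)) by
        norm_num]
      rw [integral_rpow_mul_exp_neg_mul_Ioi (by linarith) hlam0]
    · filter_upwards [self_mem_ae_restrict measurableSet_Ioi] with x hx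
      have : (0:ℝ) < x := hx
      positivity
  -- combine
  calc _ ≤ _ := step1
    _ = ENNReal.ofReal (Real.exp (c*T)) * ∫⁻ u in Set.Ico (0:ℝ) t,
          ENNReal.ofReal (u ^ (-(2*δ)) * Real.exp (-(lam * u))) := by
        rw [lintegral_const_mul' _ _ ENNReal.ofReal_ne_top, step2]
    _ ≤ ENNReal.ofReal (Real.exp (c*T)) * ENNReal.ofReal ((1/lam) ^ (1-2*δ) * Real.Gamma (1-2*δ)) := by
        gcongr
    _ = ENNReal.ofReal (Real.exp (c*T) * c ^ (2*δ-1) * Real.Gamma (1-2*δ))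
          * ENNReal.ofReal ((1 + a) ^ (2*δ - 1)) := by
        rw [← ENNReal.ofReal_mul (Real.exp_nonneg _), ← ENNReal.ofReal_mul (by positivity)]
        congr 1
        have e1 : (1/lam) ^ (1-2*δ) = lam ^ (2*δ-1) := by
          rw [one_div, Real.inv_rpow hlam0.le, ← Real.rpow_neg hlam0.le, neg_sub]
        have e2 : lam ^ (2*δ-1) = c ^ (2*δ-1) * (1+a) ^ (2*δ-1) :=
          Real.mul_rpow hc.le h1a.le
        rw [e1, e2]; ring

open MeasureTheory Set ENNReal in
theorem stmt_7 (k : ℕ) (c T : ℝ) (hc : 0 < c) (hT : 0 < T) (δ : ℝ)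
    (hδ : δ ∈ Set.Ioo (0:ℝ) (1/2)) :
    ∃ C : ℝ, 0 < C ∧
      ∀ (μ : Measure (EuclideanSpace ℝ (Fin k))), ∀ t ∈ Set.Ioc (0:ℝ) T,
        (∫⁻ s in Set.Ioc (0:ℝ) t,
            ENNReal.ofReal ((t - s) ^ (-(2*δ))) *
              ∫⁻ ξ, ENNReal.ofReal (Real.exp (-c * (t - s) * ‖ξ‖ ^ 2)) ∂μ)
          ≤ ENNReal.ofReal C *
              ∫⁻ ξ, ENNReal.ofReal ((1 + ‖ξ‖ ^ 2) ^ (2*δ - 1)) ∂μ := by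
  have hG : 0 < Real.Gamma (1-2*δ) := Real.Gamma_pos_of_pos (by linarith [hδ.2])
  have hCpos : 0 < Real.exp (c*T) * c ^ (2*δ-1) * Real.Gamma (1-2*δ) := by
    have := Real.rpow_pos_of_pos hc (2*δ-1)
    positivity
  refine ⟨Real.exp (c*T) * c ^ (2*δ-1) * Real.Gamma (1-2*δ), hCpos, ?_⟩
  intro μ t ht
  have hHmeas : Measurable (fun ξ : EuclideanSpace ℝ (Fin k) =>
      ENNReal.ofReal ((1 + ‖ξ‖ ^ 2) ^ (2*δ - 1))) :=
    ((measurable_const.add (measurable_norm.pow measurable_const)).pow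
      measurable_const).ennreal_ofReal
  by_cases hI : (∫⁻ ξ, ENNReal.ofReal ((1 + ‖ξ‖ ^ 2) ^ (2*δ - 1)) ∂μ) = ⊤
  · rw [hI, ENNReal.mul_top (by simp [hCpos])]
    exact le_top
  -- μ is σ-finite
  have hsf : SigmaFinite μ := by
    apply Measure.sigmaFinite_of_countable
      (countable_range (fun n : ℕ =>
        {ξ : EuclideanSpace ℝ (Fin k) | (n:ℝ≥0∞)⁻¹ ≤ ENNReal.ofReal ((1 + ‖ξ‖ ^ 2) ^ (2*δ - 1))}))
    · rintro s ⟨n, rfl⟩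
      have hb := mul_meas_ge_le_lintegral (μ := μ) hHmeas (n:ℝ≥0∞)⁻¹
      rw [lt_top_iff_ne_top]
      intro htop
      rw [htop, ENNReal.mul_top (by simp)] at hb
      exact hI (top_le_iff.mp hb)
    · rw [sUnion_range]
      ext ξ
      simp only [mem_iUnion, mem_setOf_eq, mem_univ, iff_true]
      obtain ⟨n, hn⟩ := ENNReal.exists_inv_nat_lt (a := ENNReal.ofReal ((1 + ‖ξ‖ ^ 2) ^ (2*δ - 1)))
        (by
          simp only [ne_eq, ENNReal.ofReal_eq_zero, not_le]
          positivity)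
      exact ⟨n, hn.le⟩
  have hmeas : Measurable (Function.uncurry fun (s : ℝ) (ξ : EuclideanSpace ℝ (Fin k)) =>
      ENNReal.ofReal ((t - s) ^ (-(2*δ))) *
        ENNReal.ofReal (Real.exp (-c * (t - s) * ‖ξ‖ ^ 2))) := by
    refine Measurable.mul (f := fun p : ℝ × EuclideanSpace ℝ (Fin k) => ENNReal.ofReal ((t - p.1) ^ (-(2*δ)))) (g := fun p : ℝ × EuclideanSpace ℝ (Fin k) => ENNReal.ofReal (Real.exp (-c * (t - p.1) * ‖p.2‖ ^ 2))) ?_ ?_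
    · exact (((measurable_const.sub measurable_fst).pow measurable_const).ennreal_ofReal)
    · exact ((Real.measurable_exp.comp
        (((measurable_const.mul (measurable_const.sub measurable_fst))).mul
          ((measurable_snd.norm).pow measurable_const))).ennreal_ofReal)
  calc (∫⁻ s in Set.Ioc (0:ℝ) t,
            ENNReal.ofReal ((t - s) ^ (-(2*δ))) *
              ∫⁻ ξ, ENNReal.ofReal (Real.exp (-c * (t - s) * ‖ξ‖ ^ 2)) ∂μ)
      = ∫⁻ s in Set.Ioc (0:ℝ) t, ∫⁻ ξ, ENNReal.ofReal ((t - s) ^ (-(2*δ))) *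
              ENNReal.ofReal (Real.exp (-c * (t - s) * ‖ξ‖ ^ 2)) ∂μ := by
        refine lintegral_congr fun s => ?_
        rw [lintegral_const_mul' _ _ ENNReal.ofReal_ne_top]
    _ = ∫⁻ ξ, (∫⁻ s in Set.Ioc (0:ℝ) t, ENNReal.ofReal ((t - s) ^ (-(2*δ))) *
              ENNReal.ofReal (Real.exp (-c * (t - s) * ‖ξ‖ ^ 2))) ∂μ :=
        lintegral_lintegral_swap hmeas.aemeasurable
    _ ≤ ∫⁻ ξ, ENNReal.ofReal (Real.exp (c*T) * c ^ (2*δ-1) * Real.Gamma (1-2*δ)) *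
              ENNReal.ofReal ((1 + ‖ξ‖ ^ 2) ^ (2*δ - 1)) ∂μ := by
        refine lintegral_mono fun ξ => ?_
        exact keylem c T hc hT δ hδ (‖ξ‖^2) (by positivity) t ht
    _ = _ := lintegral_const_mul' _ _ ENNReal.ofReal_ne_top
end

section
/- Let k ≥ 1, c > 0, C > 0, δ ∈ (0,1). Suppose Γ satisfies the time-derivative Gaussian bound |∂_τ Γ(τ,x;s,y)| ≤ C (τ−s)^(−(k+2)/2) exp(−c|x−y|²/(τ−s)) for 0 ≤ s < τ ≤ T, and τ ↦ Γ(τ,x;s,y) is C¹. Then for 0 < t ≤ t+h ≤ T and x ∈ ℝ^k, ∫₀^t (t−s)^(δ−1) ∫_{ℝ^k} |Γ(t+h,x;s,y) − Γ(t,x;s,y)| dy ds ≤ C_δ h^δ, where C_δ depends only on δ, k, c, C. -/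
set_option maxHeartbeats 1000000

open MeasureTheory Set Real

lemma aux_log_le_rpow_div {x p : ℝ} (hp : 0 < p) (hx : 0 < x) :
    Real.log x ≤ x ^ p / p := by
  have h1 : Real.log (x ^ p) = p * Real.log x := Real.log_rpow hx p
  have h2 : Real.log (x ^ p) ≤ x ^ p - 1 := Real.log_le_sub_one_of_pos (Real.rpow_pos_of_pos hx p)
  have h3 : p * Real.log x ≤ x ^ p := by nlinarith [Real.rpow_pos_of_pos hx p]
  rw [le_div_iff₀ hp]
  linarith [h3]

lemma aux_gauss_integrable {k : ℕ} {b : ℝ} (hb : 0 < b) (x : EuclideanSpace ℝ (Fin k)) :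
    Integrable (fun y : EuclideanSpace ℝ (Fin k) => Real.exp (-b * ‖x - y‖ ^ 2)) := by
  have h0 : Integrable (fun v : EuclideanSpace ℝ (Fin k) =>
      Real.exp (-b * ‖v‖ ^ 2)) := by
    have h1 := GaussianFourier.integrable_cexp_neg_mul_sq_norm_add (V := EuclideanSpace ℝ (Fin k))
      (b := (b : ℂ)) (by simpa using hb) 0 0
    have h2 := h1.norm
    refine h2.congr ?_
    filter_upwards with v
    simp only [Complex.norm_exp]
    congr 1
    have : (-(b:ℂ) * ↑‖v‖ ^ 2 + 0 * ↑(inner ℝ (0 : EuclideanSpace ℝ (Fin k)) v : ℝ))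
        = ((-b * ‖v‖ ^ 2 : ℝ) : ℂ) := by push_cast; ring
    rw [this, Complex.ofReal_re]
  simpa using h0.comp_sub_left x

lemma aux_gauss_integral {k : ℕ} {b : ℝ} (hb : 0 < b) (x : EuclideanSpace ℝ (Fin k)) :
    ∫ y : EuclideanSpace ℝ (Fin k), Real.exp (-b * ‖x - y‖ ^ 2)
      = (Real.pi / b) ^ ((k : ℝ) / 2) := by
  rw [integral_sub_left_eq_self (fun v : EuclideanSpace ℝ (Fin k) => Real.exp (-b * ‖v‖ ^ 2)) _ x]
  rw [GaussianFourier.integral_rexp_neg_mul_sq_norm hb]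
  norm_num [finrank_euclideanSpace_fin]

lemma aux_inner_est {k : ℕ} {c C T : ℝ} (hc : 0 < c) (hC : 0 < C)
    {Γ : ℝ → EuclideanSpace ℝ (Fin k) → ℝ → EuclideanSpace ℝ (Fin k) → ℝ}
    (hdiff : ∀ s : ℝ, ∀ x y, ∀ τ : ℝ, 0 ≤ s → s < τ → τ ≤ T →
      DifferentiableAt ℝ (fun τ' => Γ τ' x s y) τ)
    (hderiv : ∀ s : ℝ, ∀ x y, ∀ τ : ℝ, 0 ≤ s → s < τ → τ ≤ T →
      |deriv (fun τ' => Γ τ' x s y) τ|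
        ≤ C * (τ - s) ^ (-((k : ℝ) + 2) / 2) * Real.exp (-c * ‖x - y‖ ^ 2 / (τ - s)))
    {s t h : ℝ} (hs : 0 < s) (hst : s < t) (hh : 0 ≤ h) (hT : t + h ≤ T)
    (x : EuclideanSpace ℝ (Fin k)) :
    (∫ y : EuclideanSpace ℝ (Fin k), |Γ (t + h) x s y - Γ t x s y|)
      ≤ C * (Real.pi / c) ^ ((k : ℝ) / 2) * (Real.log (t + h - s) - Real.log (t - s)) := by
  have hu : 0 < t - s := by linarith
  have hv : 0 < t + h - s := by linarith
  have huv : t - s ≤ t + h - s := by linarith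
  have hab : t ≤ t + h := by linarith
  have hk0 : (0:ℝ) ≤ (k:ℝ) := Nat.cast_nonneg k
  set e : ℝ := -((k : ℝ) + 2) / 2 with he
  have he0 : e ≤ 0 := by rw [he]; linarith
  set B : ℝ → EuclideanSpace ℝ (Fin k) → ℝ := fun τ y =>
    C * (τ - s) ^ e * Real.exp (-c * ‖x - y‖ ^ 2 / (τ - s)) with hB
  have hBnonneg : ∀ τ y, 0 < τ - s → 0 ≤ B τ y := by
    intro τ y hτ
    have := Real.rpow_nonneg hτ.le e
    have := Real.exp_pos (-c * ‖x - y‖ ^ 2 / (τ - s))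
    positivity
  -- measurability of B
  have hmB : Measurable (Function.uncurry B) := by
    apply Measurable.mul
    · exact (measurable_const.mul ((measurable_fst.sub_const s).pow measurable_const))
    · apply Real.measurable_exp.comp
      apply Measurable.div
      · exact ((continuous_const.sub continuous_snd).norm.pow 2).measurable.const_mul (-c)
      · exact measurable_fst.sub_const s
  -- dominating function on the strip
  set Bd : EuclideanSpace ℝ (Fin k) → ℝ := fun y =>
    C * (t - s) ^ e * Real.exp (-(c / (t + h - s)) * ‖x - y‖ ^ 2) with hBd
  have hBle : ∀ τ ∈ Set.Ioc t (t + h), ∀ y, B τ y ≤ Bd y := by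
    intro τ hτ y
    have hτs : 0 < τ - s := by linarith [hτ.1]
    have h1 : (τ - s) ^ e ≤ (t - s) ^ e :=
      Real.rpow_le_rpow_of_nonpos hu (by linarith [hτ.1]) he0
    have h2 : Real.exp (-c * ‖x - y‖ ^ 2 / (τ - s))
        ≤ Real.exp (-(c / (t + h - s)) * ‖x - y‖ ^ 2) := by
      apply Real.exp_le_exp.2
      have hn : 0 ≤ c * ‖x - y‖ ^ 2 := by positivity
      have : c * ‖x - y‖ ^ 2 / (t + h - s) ≤ c * ‖x - y‖ ^ 2 / (τ - s) :=
        div_le_div_of_nonneg_left hn hτs (by linarith [hτ.2])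
      have heq1 : -c * ‖x - y‖ ^ 2 / (τ - s) = -(c * ‖x - y‖ ^ 2 / (τ - s)) := by ring
      have heq2 : -(c / (t + h - s)) * ‖x - y‖ ^ 2 = -(c * ‖x - y‖ ^ 2 / (t + h - s)) := by ring
      rw [heq1, heq2]
      linarith
    have h3 : 0 ≤ C * (τ - s) ^ e := by positivity
    calc C * (τ - s) ^ e * Real.exp (-c * ‖x - y‖ ^ 2 / (τ - s))
        ≤ C * (τ - s) ^ e * Real.exp (-(c / (t + h - s)) * ‖x - y‖ ^ 2) := by
          exact mul_le_mul_of_nonneg_left h2 h3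
      _ ≤ C * (t - s) ^ e * Real.exp (-(c / (t + h - s)) * ‖x - y‖ ^ 2) := by
          have := Real.exp_pos (-(c / (t + h - s)) * ‖x - y‖ ^ 2)
          apply mul_le_mul_of_nonneg_right _ this.le
          exact mul_le_mul_of_nonneg_left h1 hC.le
  have hBd_int : Integrable Bd := by
    exact (aux_gauss_integrable (div_pos hc hv) x).const_mul _
  -- finite measure on the time strip
  set μτ : Measure ℝ := volume.restrict (Set.Ioc t (t + h)) with hμτ
  haveI : IsFiniteMeasure μτ := by
    constructor
    rw [hμτ, Measure.restrict_apply_univ]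
    exact measure_Ioc_lt_top
  -- product integrability
  have hprod : Integrable (Function.uncurry B) (μτ.prod volume) := by
    have hdom : Integrable (fun p : ℝ × EuclideanSpace ℝ (Fin k) => Bd p.2) (μτ.prod volume) := by
      have h1 : Integrable (fun _ : ℝ => (1:ℝ)) μτ := integrable_const 1
      have := h1.mul_prod hBd_int
      simpa using this
    apply hdom.mono' (hmB.aestronglyMeasurable)
    rw [hμτ, ← Measure.restrict_univ (μ := (volume : Measure (EuclideanSpace ℝ (Fin k)))),
      Measure.prod_restrict]
    rw [ae_restrict_iff' (measurableSet_Ioc.prod MeasurableSet.univ)]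
    filter_upwards with p hp
    have hp1 : p.1 ∈ Set.Ioc t (t + h) := hp.1
    have h0 : 0 ≤ B p.1 p.2 := hBnonneg _ _ (by linarith [hp1.1])
    show ‖B p.1 p.2‖ ≤ Bd p.2
    rw [Real.norm_eq_abs, abs_of_nonneg h0]
    exact hBle p.1 hp1 p.2
  -- pointwise FTC bound
  have hkey : ∀ y, |Γ (t + h) x s y - Γ t x s y| ≤ ∫ τ in Set.Ioc t (t + h), B τ y := by
    intro y
    set f : ℝ → ℝ := fun τ' => Γ τ' x s y with hf
    have hdiff' : ∀ τ ∈ Set.uIcc t (t + h), DifferentiableAt ℝ f τ := by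
      rw [Set.uIcc_of_le hab]
      intro τ hτ
      exact hdiff s x y τ hs.le (lt_of_lt_of_le hst hτ.1) (le_trans hτ.2 hT)
    have hBcont : ContinuousOn (fun τ => B τ y) (Set.uIcc t (t + h)) := by
      rw [Set.uIcc_of_le hab]
      apply ContinuousOn.mul
      · apply ContinuousOn.mul continuousOn_const
        apply ContinuousOn.rpow_const ((continuous_id.sub continuous_const).continuousOn)
        intro τ hτ
        left
        have : 0 < τ - s := by linarith [hτ.1]
        exact ne_of_gt this
      · apply Continuous.comp_continuousOn Real.continuous_exp
        apply ContinuousOn.div continuousOn_const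
          ((continuous_id.sub continuous_const).continuousOn)
        intro τ hτ
        have : 0 < τ - s := by linarith [hτ.1]
        exact ne_of_gt this
    have hBint : IntervalIntegrable (fun τ => B τ y) volume t (t + h) :=
      hBcont.intervalIntegrable
    have hderint : IntervalIntegrable (deriv f) volume t (t + h) := by
      apply hBint.mono_fun' ((measurable_deriv f).aestronglyMeasurable)
      filter_upwards [ae_restrict_mem measurableSet_uIoc] with τ hτ
      rw [Set.uIoc_of_le hab] at hτ
      rw [Real.norm_eq_abs]
      exact hderiv s x y τ hs.le (by linarith [hτ.1]) (le_trans hτ.2 hT)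
    have heq : ∫ τ in t..(t + h), deriv f τ = f (t + h) - f t :=
      intervalIntegral.integral_deriv_eq_sub hdiff' hderint
    have hstep : |Γ (t + h) x s y - Γ t x s y| ≤ ∫ τ in t..(t + h), |deriv f τ| := by
      rw [show Γ (t + h) x s y - Γ t x s y = f (t + h) - f t from rfl, ← heq]
      simpa [Real.norm_eq_abs] using
        intervalIntegral.norm_integral_le_integral_norm (f := deriv f) (a := t) (b := t + h) hab
    have hmono : ∫ τ in t..(t + h), |deriv f τ| ≤ ∫ τ in t..(t + h), B τ y := by
      apply intervalIntegral.integral_mono_on hab hderint.abs hBint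
      intro τ hτ
      exact hderiv s x y τ hs.le (by linarith [hτ.1]) (le_trans hτ.2 hT)
    calc |Γ (t + h) x s y - Γ t x s y| ≤ ∫ τ in t..(t + h), |deriv f τ| := hstep
      _ ≤ ∫ τ in t..(t + h), B τ y := hmono
      _ = ∫ τ in Set.Ioc t (t + h), B τ y := intervalIntegral.integral_of_le hab
  -- integrability of φ
  have hφ_int : Integrable (fun y => ∫ τ, B τ y ∂μτ) := by
    have := hprod.integral_prod_right
    exact this
  have hmono1 : (∫ y : EuclideanSpace ℝ (Fin k), |Γ (t + h) x s y - Γ t x s y|)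
      ≤ ∫ y, (∫ τ, B τ y ∂μτ) := by
    apply integral_mono_of_nonneg
    · filter_upwards with y; exact abs_nonneg _
    · exact hφ_int
    · filter_upwards with y
      exact hkey y
  -- swap
  have hswap : ∫ y, (∫ τ, B τ y ∂μτ) = ∫ τ, (∫ y, B τ y) ∂μτ :=
    (integral_integral_swap hprod).symm
  -- Gaussian computation for fixed τ
  have hgauss : ∀ τ ∈ Set.Ioc t (t + h),
      (∫ y, B τ y) = C * (Real.pi / c) ^ ((k : ℝ) / 2) * (τ - s)⁻¹ := by
    intro τ hτ
    have hτs : 0 < τ - s := by linarith [hτ.1]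
    have hb : 0 < c / (τ - s) := div_pos hc hτs
    have hrw : ∀ y : EuclideanSpace ℝ (Fin k),
        B τ y = C * (τ - s) ^ e * Real.exp (-(c / (τ - s)) * ‖x - y‖ ^ 2) := by
      intro y
      show C * (τ - s) ^ e * Real.exp (-c * ‖x - y‖ ^ 2 / (τ - s)) = _
      rw [show -c * ‖x - y‖ ^ 2 / (τ - s) = -(c / (τ - s)) * ‖x - y‖ ^ 2 from by ring]
    rw [integral_congr_ae (Filter.Eventually.of_forall hrw)]
    rw [integral_const_mul, aux_gauss_integral hb x]
    have h1 : Real.pi / (c / (τ - s)) = (Real.pi / c) * (τ - s) := by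
      field_simp
    rw [h1]
    have h2 : ((Real.pi / c) * (τ - s)) ^ ((k : ℝ) / 2)
        = (Real.pi / c) ^ ((k : ℝ) / 2) * (τ - s) ^ ((k : ℝ) / 2) := by
      apply Real.mul_rpow (by positivity) hτs.le
    rw [h2]
    have h3 : (τ - s) ^ e * (τ - s) ^ ((k : ℝ) / 2) = (τ - s)⁻¹ := by
      rw [← Real.rpow_add hτs]
      have : e + (k : ℝ) / 2 = -1 := by rw [he]; ring
      rw [this, Real.rpow_neg_one]
    calc C * (τ - s) ^ e * ((Real.pi / c) ^ ((k : ℝ) / 2) * (τ - s) ^ ((k : ℝ) / 2))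
        = C * (Real.pi / c) ^ ((k : ℝ) / 2) * ((τ - s) ^ e * (τ - s) ^ ((k : ℝ) / 2)) := by ring
      _ = C * (Real.pi / c) ^ ((k : ℝ) / 2) * (τ - s)⁻¹ := by rw [h3]
  -- integrate in τ
  have hτint : ∫ τ, (∫ y, B τ y) ∂μτ
      = C * (Real.pi / c) ^ ((k : ℝ) / 2) * (Real.log (t + h - s) - Real.log (t - s)) := by
    rw [hμτ]
    rw [setIntegral_congr_fun measurableSet_Ioc hgauss]
    rw [integral_const_mul]
    congr 1
    have h1 : ∫ τ in Set.Ioc t (t + h), (τ - s)⁻¹ = ∫ τ in t..(t + h), (τ - s)⁻¹ :=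
      (intervalIntegral.integral_of_le hab).symm
    rw [h1]
    rw [intervalIntegral.integral_comp_sub_right (fun x => x⁻¹) s]
    rw [integral_inv]
    · rw [Real.log_div (ne_of_gt hv) (ne_of_gt hu)]
    · rw [Set.uIcc_of_le huv]
      intro hmem
      exact absurd hmem.1 (not_le.2 hu)
  calc (∫ y : EuclideanSpace ℝ (Fin k), |Γ (t + h) x s y - Γ t x s y|)
      ≤ ∫ y, (∫ τ, B τ y ∂μτ) := hmono1
    _ = ∫ τ, (∫ y, B τ y) ∂μτ := hswap
    _ = C * (Real.pi / c) ^ ((k : ℝ) / 2) * (Real.log (t + h - s) - Real.log (t - s)) := hτint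

theorem stmt_12 (k : ℕ) (hk : 1 ≤ k) (c C T δ : ℝ) (hc : 0 < c) (hC : 0 < C) (hT : 0 < T)
    (hδ : δ ∈ Set.Ioo (0:ℝ) 1)
    (Γ : ℝ → EuclideanSpace ℝ (Fin k) → ℝ → EuclideanSpace ℝ (Fin k) → ℝ)
    (hdiff : ∀ s : ℝ, ∀ x y, ∀ τ : ℝ, 0 ≤ s → s < τ → τ ≤ T →
      DifferentiableAt ℝ (fun τ' => Γ τ' x s y) τ)
    (hderiv : ∀ s : ℝ, ∀ x y, ∀ τ : ℝ, 0 ≤ s → s < τ → τ ≤ T →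
      |deriv (fun τ' => Γ τ' x s y) τ|
        ≤ C * (τ - s) ^ (-((k : ℝ) + 2) / 2) * Real.exp (-c * ‖x - y‖ ^ 2 / (τ - s))) :
    ∃ Cδ : ℝ, 0 < Cδ ∧ ∀ t h : ℝ, 0 < t → 0 ≤ h → t + h ≤ T →
      ∀ x : EuclideanSpace ℝ (Fin k),
      (∫ s in Set.Ioc (0:ℝ) t, (t - s) ^ (δ - 1) *
          ∫ y : EuclideanSpace ℝ (Fin k), |Γ (t + h) x s y - Γ t x s y|)
        ≤ Cδ * h ^ δ := by
  obtain ⟨hδ0, hδ1⟩ := hδ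
  have h1δ : 0 < 1 - δ := by linarith
  set A : ℝ := C * (Real.pi / c) ^ ((k : ℝ) / 2) with hA
  have hA0 : 0 < A := by
    have : 0 < Real.pi / c := div_pos Real.pi_pos hc
    positivity
  set K : ℝ := Real.log 2 / δ + 4 / δ ^ 2 + 1 / (1 - δ) with hK
  have hK0 : 0 < K := by
    have hlog2 : 0 < Real.log 2 := Real.log_pos (by norm_num)
    have h1 : 0 < Real.log 2 / δ := div_pos hlog2 hδ0
    have h2 : 0 < 4 / δ ^ 2 := by positivity
    have h3 : 0 < 1 / (1 - δ) := by positivity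
    rw [hK]
    linarith
  refine ⟨A * K, by positivity, ?_⟩
  intro t h ht hh htT x
  rcases eq_or_lt_of_le hh with hh0 | hh0
  · -- h = 0
    rw [← hh0]
    have hLHS : (∫ s in Set.Ioc (0:ℝ) t, (t - s) ^ (δ - 1) *
        ∫ y : EuclideanSpace ℝ (Fin k), |Γ (t + 0) x s y - Γ t x s y|) = 0 := by
      have : ∀ s : ℝ, (t - s) ^ (δ - 1) *
          (∫ y : EuclideanSpace ℝ (Fin k), |Γ (t + 0) x s y - Γ t x s y|) = 0 := by
        intro s
        simp [add_zero]
      simp only [this, integral_zero]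
    rw [hLHS, Real.zero_rpow (ne_of_gt hδ0), mul_zero]
  · -- h > 0
    set m : ℝ := min t h with hm
    have hm0 : 0 < m := lt_min ht hh0
    have hmt : m ≤ t := min_le_left _ _
    have hmh : m ≤ h := min_le_right _ _
    clear_value A K
    set g1 : ℝ → ℝ := fun s => A * h * (t - s) ^ (δ - 2) with hg1
    set g2 : ℝ → ℝ := fun s => A * (Real.log 2 * (t - s) ^ (δ - 1)
        + 2 / δ * h ^ (δ / 2) * (t - s) ^ (δ / 2 - 1)) with hg2
    set H : ℝ → ℝ := fun s => if m ≤ t - s then g1 s else g2 s with hH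
    -- integrability of the pieces
    have hint1 : IntegrableOn g1 (Set.Ioc 0 (t - m)) := by
      have hcont : ContinuousOn g1 (Set.Icc 0 (t - m)) := by
        apply ContinuousOn.mul continuousOn_const
        apply ContinuousOn.rpow_const ((continuous_const.sub continuous_id).continuousOn)
        intro s hs
        left
        have : 0 < t - s := by
          rcases hs with ⟨_, hs2⟩
          linarith
        exact ne_of_gt this
      exact (hcont.integrableOn_Icc).mono_set Set.Ioc_subset_Icc_self
    have hint2 : IntegrableOn g2 (Set.Ioc (t - m) t) := by
      have i1 : IntervalIntegrable (fun u : ℝ => u ^ (δ - 1)) volume 0 m :=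
        intervalIntegral.intervalIntegrable_rpow' (by linarith)
      have i2 : IntervalIntegrable (fun u : ℝ => u ^ (δ / 2 - 1)) volume 0 m :=
        intervalIntegral.intervalIntegrable_rpow' (by linarith)
      have j1 : IntervalIntegrable (fun s : ℝ => (t - s) ^ (δ - 1)) volume (t - m) t := by
        have := (i1.comp_sub_left t).symm
        simpa using this
      have j2 : IntervalIntegrable (fun s : ℝ => (t - s) ^ (δ / 2 - 1)) volume (t - m) t := by
        have := (i2.comp_sub_left t).symm
        simpa using this
      have : IntervalIntegrable g2 volume (t - m) t := by
        apply IntervalIntegrable.const_mul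
        exact (j1.const_mul _).add (j2.const_mul _)
      exact this.1
    have heq1 : Set.EqOn H g1 (Set.Ioc 0 (t - m)) := by
      intro s hs
      have : m ≤ t - s := by rcases hs with ⟨_, hs2⟩; linarith
      simp only [hH, if_pos this]
    have heq2 : Set.EqOn H g2 (Set.Ioc (t - m) t) := by
      intro s hs
      have : ¬ m ≤ t - s := by rcases hs with ⟨hs1, _⟩; push_neg; linarith
      simp only [hH, if_neg this]
    have hintH1 : IntegrableOn H (Set.Ioc 0 (t - m)) :=
      (integrableOn_congr_fun heq1 measurableSet_Ioc).2 hint1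
    have hintH2 : IntegrableOn H (Set.Ioc (t - m) t) :=
      (integrableOn_congr_fun heq2 measurableSet_Ioc).2 hint2
    have hsplit : Set.Ioc (0:ℝ) t = Set.Ioc 0 (t - m) ∪ Set.Ioc (t - m) t :=
      (Set.Ioc_union_Ioc_eq_Ioc (by linarith) (by linarith)).symm
    have hintH : IntegrableOn H (Set.Ioc 0 t) := by
      rw [hsplit]; exact hintH1.union hintH2
    -- pointwise bound
    have hFH : ∀ s ∈ Set.Ioc (0:ℝ) t, (t - s) ^ (δ - 1) *
        (∫ y : EuclideanSpace ℝ (Fin k), |Γ (t + h) x s y - Γ t x s y|) ≤ H s := by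
      intro s hs
      obtain ⟨hs0, hst'⟩ := hs
      rcases eq_or_lt_of_le hst' with heq | hst
      · -- s = t
        subst heq
        have hcond : ¬ m ≤ s - s := by rw [sub_self]; push_neg; exact hm0
        have hLHS0 : (s - s) ^ (δ - 1) *
            (∫ y : EuclideanSpace ℝ (Fin k), |Γ (s + h) x s y - Γ s x s y|) = 0 := by
          rw [sub_self, Real.zero_rpow (sub_ne_zero_of_ne (ne_of_lt hδ1)), zero_mul]
        rw [hLHS0]
        have hHs : H s = g2 s := by simp only [hH]; rw [if_neg hcond]
        rw [hHs]
        simp only [hg2]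
        rw [sub_self, Real.zero_rpow (sub_ne_zero_of_ne (ne_of_lt hδ1)),
          Real.zero_rpow (sub_ne_zero_of_ne (ne_of_lt (by linarith : δ / 2 < (1:ℝ))))]
        simp
      · -- s < t
        have hu : 0 < t - s := by linarith
        have hI := aux_inner_est hc hC hdiff hderiv hs0 hst hh htT x
        have hrpow_nonneg : 0 ≤ (t - s) ^ (δ - 1) := Real.rpow_nonneg hu.le _
        have step1 : (t - s) ^ (δ - 1) *
            (∫ y : EuclideanSpace ℝ (Fin k), |Γ (t + h) x s y - Γ t x s y|)
            ≤ (t - s) ^ (δ - 1) * (A * (Real.log (t + h - s) - Real.log (t - s))) := by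
          apply mul_le_mul_of_nonneg_left _ hrpow_nonneg
          rw [hA]
          exact hI
        have hv : 0 < t + h - s := by linarith
        have hlogdiv : Real.log (t + h - s) - Real.log (t - s)
            = Real.log ((t + h - s) / (t - s)) := (Real.log_div (ne_of_gt hv) (ne_of_gt hu)).symm
        by_cases hcase : m ≤ t - s
        · -- large u branch : h ≤ t - s
          have hhu : h ≤ t - s := by
            rcases le_or_gt t h with h' | h'
            · exfalso
              have : m = t := min_eq_left h'
              rw [this] at hcase
              linarith
            · have : m = h := min_eq_right h'.le
              rw [this] at hcase
              exact hcase
          have hlog : Real.log ((t + h - s) / (t - s)) ≤ h / (t - s) := by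
            have e1 : (t + h - s) / (t - s) = 1 + h / (t - s) := by field_simp; ring
            rw [e1]
            have := Real.log_le_sub_one_of_pos (show (0:ℝ) < 1 + h / (t - s) by positivity)
            linarith
          have step2 : (t - s) ^ (δ - 1) * (A * (Real.log (t + h - s) - Real.log (t - s)))
              ≤ (t - s) ^ (δ - 1) * (A * (h / (t - s))) := by
            apply mul_le_mul_of_nonneg_left _ hrpow_nonneg
            apply mul_le_mul_of_nonneg_left _ hA0.le
            rw [hlogdiv]
            exact hlog
          have e2 : (t - s) ^ (δ - 1) * (A * (h / (t - s))) = A * h * (t - s) ^ (δ - 2) := by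
            rw [show δ - 2 = (δ - 1) + (-1) from by ring, Real.rpow_add hu, Real.rpow_neg_one,
              div_eq_mul_inv]
            ring
          simp only [hH, hg1, if_pos hcase]
          calc (t - s) ^ (δ - 1) *
              (∫ y : EuclideanSpace ℝ (Fin k), |Γ (t + h) x s y - Γ t x s y|)
              ≤ (t - s) ^ (δ - 1) * (A * (Real.log (t + h - s) - Real.log (t - s))) := step1
            _ ≤ (t - s) ^ (δ - 1) * (A * (h / (t - s))) := step2
            _ = A * h * (t - s) ^ (δ - 2) := e2
        · -- small u branch : t - s ≤ m ≤ h
          push_neg at hcase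
          have huh : t - s ≤ h := le_trans hcase.le hmh
          have hq : 0 < h / (t - s) := div_pos hh0 hu
          have hlog : Real.log ((t + h - s) / (t - s))
              ≤ Real.log 2 + (h / (t - s)) ^ (δ / 2) / (δ / 2) := by
            have l1 : Real.log ((t + h - s) / (t - s)) ≤ Real.log (2 * h / (t - s)) := by
              apply Real.log_le_log (by positivity)
              exact (div_le_div_iff_of_pos_right hu).2 (by linarith)
            have l2 : Real.log (2 * h / (t - s)) = Real.log 2 + Real.log (h / (t - s)) := by
              rw [show 2 * h / (t - s) = 2 * (h / (t - s)) from by ring]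
              rw [Real.log_mul (by norm_num) (ne_of_gt hq)]
            have l3 : Real.log (h / (t - s)) ≤ (h / (t - s)) ^ (δ / 2) / (δ / 2) :=
              aux_log_le_rpow_div (by linarith) hq
            linarith
          have step2 : (t - s) ^ (δ - 1) * (A * (Real.log (t + h - s) - Real.log (t - s)))
              ≤ (t - s) ^ (δ - 1) * (A * (Real.log 2 + (h / (t - s)) ^ (δ / 2) / (δ / 2))) := by
            apply mul_le_mul_of_nonneg_left _ hrpow_nonneg
            apply mul_le_mul_of_nonneg_left _ hA0.le
            rw [hlogdiv]
            exact hlog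
          have e1 : (h / (t - s)) ^ (δ / 2) = h ^ (δ / 2) / (t - s) ^ (δ / 2) :=
            Real.div_rpow hh0.le hu.le _
          have e2 : (t - s) ^ (δ - 1) / (t - s) ^ (δ / 2) = (t - s) ^ (δ / 2 - 1) := by
            rw [← Real.rpow_sub hu]
            congr 1
            ring
          have e3 : (t - s) ^ (δ - 1) * (A * (Real.log 2 + (h / (t - s)) ^ (δ / 2) / (δ / 2)))
              = g2 s := by
            simp only [hg2]
            rw [e1, ← e2]
            field_simp [ne_of_gt (Real.rpow_pos_of_pos hu (δ / 2)), hδ0.ne']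
          simp only [hH, if_neg (not_le.2 hcase)]
          calc (t - s) ^ (δ - 1) *
              (∫ y : EuclideanSpace ℝ (Fin k), |Γ (t + h) x s y - Γ t x s y|)
              ≤ (t - s) ^ (δ - 1) * (A * (Real.log (t + h - s) - Real.log (t - s))) := step1
            _ ≤ (t - s) ^ (δ - 1) * (A * (Real.log 2 + (h / (t - s)) ^ (δ / 2) / (δ / 2))) := step2
            _ = g2 s := e3
    -- value of the H integral
    have hval1 : ∫ s in Set.Ioc 0 (t - m), g1 s
        = A * h * ((t ^ (δ - 1) - m ^ (δ - 1)) / (δ - 1)) := by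
      rw [← intervalIntegral.integral_of_le (by linarith : (0:ℝ) ≤ t - m)]
      simp only [hg1]
      rw [intervalIntegral.integral_const_mul]
      congr 1
      rw [intervalIntegral.integral_comp_sub_left (fun u : ℝ => u ^ (δ - 2)) t]
      rw [show t - (t - m) = m from by ring, sub_zero]
      rw [integral_rpow (Or.inr ⟨by intro hcc; linarith [hcc] , by
        rw [Set.uIcc_of_le hmt]
        intro hmem
        exact absurd hmem.1 (not_le.2 hm0)⟩)]
      rw [show δ - 2 + 1 = δ - 1 from by ring]
    have hval2 : ∫ s in Set.Ioc (t - m) t, g2 s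
        = A * (Real.log 2 * (m ^ δ / δ) + 2 / δ * h ^ (δ / 2) * (m ^ (δ / 2) / (δ / 2))) := by
      rw [← intervalIntegral.integral_of_le (by linarith : t - m ≤ t)]
      simp only [hg2]
      rw [intervalIntegral.integral_const_mul]
      congr 1
      rw [intervalIntegral.integral_comp_sub_left
        (fun u : ℝ => Real.log 2 * u ^ (δ - 1) + 2 / δ * h ^ (δ / 2) * u ^ (δ / 2 - 1)) t]
      rw [show t - (t - m) = m from by ring, sub_self]
      rw [intervalIntegral.integral_add
        ((intervalIntegral.intervalIntegrable_rpow' (by linarith)).const_mul _)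
        ((intervalIntegral.intervalIntegrable_rpow' (by linarith)).const_mul _)]
      rw [intervalIntegral.integral_const_mul, intervalIntegral.integral_const_mul]
      rw [integral_rpow (Or.inl (by linarith)), integral_rpow (Or.inl (by linarith))]
      rw [show δ - 1 + 1 = δ from by ring, show δ / 2 - 1 + 1 = δ / 2 from by ring]
      rw [Real.zero_rpow hδ0.ne', Real.zero_rpow (by positivity : δ / 2 ≠ 0)]
      ring
    -- arithmetic bounds
    have hmδ : m ^ δ ≤ h ^ δ := Real.rpow_le_rpow hm0.le hmh hδ0.le
    have hmδ2 : m ^ (δ / 2) ≤ h ^ (δ / 2) := Real.rpow_le_rpow hm0.le hmh (by linarith)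
    have hhh : h ^ (δ / 2) * h ^ (δ / 2) = h ^ δ := by
      rw [← Real.rpow_add hh0]; congr 1; ring
    have hhδ1 : h * h ^ (δ - 1) = h ^ δ := by
      rw [show h * h ^ (δ - 1) = h ^ (1:ℝ) * h ^ (δ - 1) from by rw [Real.rpow_one],
        ← Real.rpow_add hh0]
      congr 1; ring
    have hmb : m ^ (δ - 1) - t ^ (δ - 1) ≤ h ^ (δ - 1) := by
      have h1 : 0 < t ^ (δ - 1) := Real.rpow_pos_of_pos ht _
      have h2 : 0 < h ^ (δ - 1) := Real.rpow_pos_of_pos hh0 _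
      rcases min_cases t h with ⟨he, _⟩ | ⟨he, _⟩
      · rw [hm, he]; linarith
      · rw [hm, he]; linarith
    have hb1 : A * h * ((t ^ (δ - 1) - m ^ (δ - 1)) / (δ - 1)) ≤ A * (1 / (1 - δ)) * h ^ δ := by
      have e : (t ^ (δ - 1) - m ^ (δ - 1)) / (δ - 1) = (m ^ (δ - 1) - t ^ (δ - 1)) / (1 - δ) := by
        rw [div_eq_div_iff (by intro hcc; linarith [hcc]) (by intro hcc; linarith [hcc])]
        ring
      rw [e]
      calc A * h * ((m ^ (δ - 1) - t ^ (δ - 1)) / (1 - δ))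
          ≤ A * h * (h ^ (δ - 1) / (1 - δ)) := by
            apply mul_le_mul_of_nonneg_left _ (by positivity : (0:ℝ) ≤ A * h)
            exact (div_le_div_iff_of_pos_right h1δ).2 hmb
        _ = A * (1 / (1 - δ)) * h ^ δ := by rw [← hhδ1]; ring
    have hb2 : A * (Real.log 2 * (m ^ δ / δ) + 2 / δ * h ^ (δ / 2) * (m ^ (δ / 2) / (δ / 2)))
        ≤ A * (Real.log 2 / δ + 4 / δ ^ 2) * h ^ δ := by
      have hlog2 : 0 ≤ Real.log 2 := Real.log_nonneg (by norm_num)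
      have t1 : Real.log 2 * (m ^ δ / δ) ≤ Real.log 2 / δ * h ^ δ := by
        rw [show Real.log 2 / δ * h ^ δ = Real.log 2 * (h ^ δ / δ) from by ring]
        apply mul_le_mul_of_nonneg_left _ hlog2
        exact (div_le_div_iff_of_pos_right hδ0).2 hmδ
      have t2 : 2 / δ * h ^ (δ / 2) * (m ^ (δ / 2) / (δ / 2)) ≤ 4 / δ ^ 2 * h ^ δ := by
        have hp : (0:ℝ) ≤ 2 / δ * h ^ (δ / 2) := by positivity
        calc 2 / δ * h ^ (δ / 2) * (m ^ (δ / 2) / (δ / 2))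
            ≤ 2 / δ * h ^ (δ / 2) * (h ^ (δ / 2) / (δ / 2)) := by
              apply mul_le_mul_of_nonneg_left _ hp
              exact (div_le_div_iff_of_pos_right (by linarith : (0:ℝ) < δ / 2)).2 hmδ2
          _ = 4 / δ ^ 2 * h ^ δ := by
              rw [← hhh]; field_simp; ring
      calc A * (Real.log 2 * (m ^ δ / δ) + 2 / δ * h ^ (δ / 2) * (m ^ (δ / 2) / (δ / 2)))
          ≤ A * (Real.log 2 / δ * h ^ δ + 4 / δ ^ 2 * h ^ δ) := by
            apply mul_le_mul_of_nonneg_left _ hA0.le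
            linarith
        _ = A * (Real.log 2 / δ + 4 / δ ^ 2) * h ^ δ := by ring
    -- final chain
    calc (∫ s in Set.Ioc (0:ℝ) t, (t - s) ^ (δ - 1) *
          ∫ y : EuclideanSpace ℝ (Fin k), |Γ (t + h) x s y - Γ t x s y|)
        ≤ ∫ s in Set.Ioc (0:ℝ) t, H s := by
          apply integral_mono_of_nonneg
          · filter_upwards [ae_restrict_mem measurableSet_Ioc] with s hs
            have h1 : (0:ℝ) ≤ (t - s) ^ (δ - 1) := Real.rpow_nonneg (by linarith [hs.2]) _
            have h2 : (0:ℝ) ≤ ∫ y : EuclideanSpace ℝ (Fin k), |Γ (t + h) x s y - Γ t x s y| :=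
              integral_nonneg (fun y => abs_nonneg _)
            exact mul_nonneg h1 h2
          · exact hintH
          · filter_upwards [ae_restrict_mem measurableSet_Ioc] with s hs
            exact hFH s hs
      _ = A * h * ((t ^ (δ - 1) - m ^ (δ - 1)) / (δ - 1))
          + A * (Real.log 2 * (m ^ δ / δ) + 2 / δ * h ^ (δ / 2) * (m ^ (δ / 2) / (δ / 2))) := by
          rw [hsplit, setIntegral_union (Set.Ioc_disjoint_Ioc_of_le le_rfl) measurableSet_Ioc hintH1 hintH2]
          rw [setIntegral_congr_fun measurableSet_Ioc heq1,
            setIntegral_congr_fun measurableSet_Ioc heq2, hval1, hval2]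
      _ ≤ A * (1 / (1 - δ)) * h ^ δ + A * (Real.log 2 / δ + 4 / δ ^ 2) * h ^ δ :=
          add_le_add hb1 hb2
      _ = A * K * h ^ δ := by rw [hK]; ring
end

section
/- Let κ : [0,T] → [0,∞) be integrable, and let (f_n)_{n≥0} be a sequence of nonnegative Borel functions on [0,T] with sup_{t∈[0,T]} f_0(t) = M < ∞ and f_n(t) ≤ C ∫₀^t κ(t−s) f_{n−1}(s) ds for all n ≥ 1 and t ∈ [0,T]. Then ∑_{n=0}^∞ sup_{t∈[0,T]} f_n(t)^{1/p} < ∞ for every p ≥ 1; in particular sup_{t∈[0,T]} f_n(t) → 0 as n → ∞. -/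
open MeasureTheory Set Filter

theorem stmt_15 (T : ℝ) (hT : 0 < T) (κ : ℝ → ℝ) (hκ0 : ∀ s, 0 ≤ κ s)
    (hκ : IntegrableOn κ (Set.Icc 0 T)) (C M : ℝ) (hC : 0 < C)
    (f : ℕ → ℝ → ℝ) (hmeas : ∀ n, Measurable (f n))
    (hf0 : ∀ n, ∀ t ∈ Set.Icc (0:ℝ) T, 0 ≤ f n t)
    (hM : ∀ t ∈ Set.Icc (0:ℝ) T, f 0 t ≤ M)
    (hrec : ∀ n : ℕ, 1 ≤ n → ∀ t ∈ Set.Icc (0:ℝ) T,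
      f n t ≤ C * ∫ s in Set.Ioc (0:ℝ) t, κ (t - s) * f (n - 1) s) :
    ∀ p : ℝ, 1 ≤ p →
      Summable (fun n : ℕ => ⨆ t : Set.Icc (0:ℝ) T, (f n t.1) ^ (1 / p)) ∧
      Tendsto (fun n : ℕ => ⨆ t : Set.Icc (0:ℝ) T, f n t.1) atTop (nhds 0) := by
  have h0T : (0:ℝ) ∈ Icc (0:ℝ) T := ⟨le_rfl, hT.le⟩
  have hM0 : 0 ≤ M := le_trans (hf0 0 0 h0T) (hM 0 h0T)
  -- choose δ > 0, δ ≤ T with ∫_{Ioc 0 δ} κ ≤ 1/(2C)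
  obtain ⟨δ, hδpos, hδT, hδ⟩ :
      ∃ δ : ℝ, 0 < δ ∧ δ ≤ T ∧ (∫ s in Ioc (0:ℝ) δ, κ s) ≤ 1 / (2 * C) := by
    have hcont := intervalIntegral.continuousOn_primitive (f := κ) (μ := volume)
      (a := (0:ℝ)) (b := T) hκ
    have h0 : ContinuousWithinAt (fun x => ∫ t in Ioc (0:ℝ) x, κ t) (Icc 0 T) 0 :=
      hcont 0 h0T
    have hval : (∫ t in Ioc (0:ℝ) (0:ℝ), κ t) = 0 := by simp
    have htend : Tendsto (fun x => ∫ t in Ioc (0:ℝ) x, κ t) (nhdsWithin 0 (Icc 0 T))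
        (nhds 0) := by
      have h0' := h0.tendsto
      rw [hval] at h0'
      exact h0'
    have hpos : (0:ℝ) < 1 / (2 * C) := by positivity
    have hev : ∀ᶠ x in nhdsWithin 0 (Icc 0 T),
        (∫ t in Ioc (0:ℝ) x, κ t) < 1 / (2 * C) := by
      have := htend (Iio_mem_nhds hpos)
      filter_upwards [this] with x hx using hx
    have hev' : {x : ℝ | (∫ t in Ioc (0:ℝ) x, κ t) < 1 / (2 * C)} ∈ nhdsWithin (0:ℝ) (Icc 0 T) :=
      hev
    rw [Metric.mem_nhdsWithin_iff] at hev'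
    obtain ⟨ε, hε, hball⟩ := hev'
    have h2 : (0:ℝ) < min (ε / 2) T := lt_min (by linarith) hT
    refine ⟨min (ε / 2) T, h2, min_le_right _ _, le_of_lt ?_⟩
    apply hball
    constructor
    · rw [Metric.mem_ball, Real.dist_eq]
      have h1 : min (ε / 2) T ≤ ε / 2 := min_le_left _ _
      rw [sub_zero, abs_of_pos h2]
      linarith
    · exact ⟨h2.le, min_le_right _ _⟩
  set Iκ : ℝ := ∫ s in Ioc (0:ℝ) T, κ s with hIκdef
  have hIκ0 : 0 ≤ Iκ := setIntegral_nonneg measurableSet_Ioc fun s _ => hκ0 s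
  set A : ℝ := C * Iκ with hAdef
  have hA0 : 0 ≤ A := mul_nonneg hC.le hIκ0
  -- the comparison sequence
  set g : ℕ → ℕ → ℝ :=
    fun n k => (1/2:ℝ)^n * ∑ j ∈ Finset.range k, (n.choose j : ℝ) * (2*A)^j with hgdef
  have hg0 : ∀ n k, 0 ≤ g n k := by
    intro n k
    apply mul_nonneg (by positivity)
    apply Finset.sum_nonneg
    intro j _
    positivity
  have hgrec : ∀ n k, g (n+1) (k+1) = A * g n k + (1/2) * g n (k+1) := by
    intro n k
    induction k with
    | zero =>
      simp only [hgdef, Finset.sum_range_succ, Finset.range_zero, Finset.sum_empty,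
        Nat.choose_zero_right, Nat.cast_one, pow_zero, mul_one, mul_zero, zero_add]
      ring
    | succ k ih =>
      have hch : (((n+1).choose (k+1) : ℕ) : ℝ) = (n.choose k : ℝ) + (n.choose (k+1) : ℝ) := by
        rw [Nat.choose_succ_succ]; push_cast; ring
      simp only [hgdef] at ih ⊢
      rw [Finset.sum_range_succ (fun j => (((n+1).choose j : ℕ) : ℝ) * (2*A)^j) (k+1),
        Finset.sum_range_succ (fun j => ((n.choose j : ℕ) : ℝ) * (2*A)^j) k,
        Finset.sum_range_succ (fun j => ((n.choose j : ℕ) : ℝ) * (2*A)^j) (k+1)]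
      linear_combination ih + ((1/2:ℝ)^(n+1) * (2*A)^(k+1)) * hch
  -- integrability of reflected kernel
  have hκint : ∀ {t a b : ℝ}, 0 ≤ a → a ≤ b → b ≤ t → t ≤ T →
      IntegrableOn (fun s => κ (t - s)) (Ioc a b) volume := by
    intro t a b h0a hab hbt htT
    have h1 : IntervalIntegrable κ volume 0 T :=
      (intervalIntegrable_iff_integrableOn_Ioc_of_le hT.le).2
        (hκ.mono_set Ioc_subset_Icc_self)
    have h2 := h1.comp_sub_left t
    have h3 : IntervalIntegrable (fun x => κ (t - x)) volume a b := by
      apply h2.mono_set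
      rw [Set.uIcc_of_le hab, Set.uIcc_of_ge (by linarith : t - T ≤ t - 0)]
      exact Icc_subset_Icc (by linarith) (by linarith)
    exact (intervalIntegrable_iff_integrableOn_Ioc_of_le hab).1 h3
  -- change of variables
  have hκcov : ∀ {t a b : ℝ}, a ≤ b →
      (∫ s in Ioc a b, κ (t - s)) = ∫ u in Ioc (t - b) (t - a), κ u := by
    intro t a b hab
    rw [← intervalIntegral.integral_of_le hab, intervalIntegral.integral_comp_sub_left κ t,
      intervalIntegral.integral_of_le (by linarith)]
  -- integrability of the integrand
  have hXint : ∀ {t a b B : ℝ} {m : ℕ}, 0 ≤ a → a ≤ b → b ≤ t → t ≤ T →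
      (∀ s ∈ Ioc a b, f m s ≤ B) →
      IntegrableOn (fun s => κ (t - s) * f m s) (Ioc a b) volume := by
    intro t a b B m h0a hab hbt htT hfB
    have hsub : Ioc a b ⊆ Icc (0:ℝ) T := fun s hs =>
      ⟨le_trans h0a hs.1.le, le_trans hs.2 (le_trans hbt htT)⟩
    have hGi : IntegrableOn (fun s => κ (t - s) * B) (Ioc a b) volume :=
      (hκint h0a hab hbt htT).mul_const B
    have hXm : AEStronglyMeasurable (fun s => κ (t - s) * f m s)
        (volume.restrict (Ioc a b)) :=
      ((hκint h0a hab hbt htT).aestronglyMeasurable).mul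
        ((hmeas m).aestronglyMeasurable.restrict)
    apply hGi.mono' hXm
    rw [ae_restrict_iff' measurableSet_Ioc]
    filter_upwards with s
    intro hs
    have h1 : 0 ≤ f m s := hf0 m s (hsub hs)
    have h2 : 0 ≤ κ (t - s) := hκ0 _
    rw [Real.norm_eq_abs, abs_of_nonneg (mul_nonneg h2 h1)]
    exact mul_le_mul_of_nonneg_left (hfB s hs) h2
  -- the convolution bound
  have hconv : ∀ {t a b B : ℝ} {m : ℕ}, 0 ≤ a → a ≤ b → b ≤ t → t ≤ T → 0 ≤ B →
      (∀ s ∈ Ioc a b, f m s ≤ B) →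
      (∫ s in Ioc a b, κ (t - s) * f m s) ≤ B * ∫ u in Ioc (t - b) (t - a), κ u := by
    intro t a b B m h0a hab hbt htT hB hfB
    have hGi : IntegrableOn (fun s => κ (t - s) * B) (Ioc a b) volume :=
      (hκint h0a hab hbt htT).mul_const B
    have hXi := hXint h0a hab hbt htT hfB
    calc (∫ s in Ioc a b, κ (t - s) * f m s) ≤ ∫ s in Ioc a b, κ (t - s) * B :=
          setIntegral_mono_on hXi hGi measurableSet_Ioc
            (fun s hs => mul_le_mul_of_nonneg_left (hfB s hs) (hκ0 _))
      _ = (∫ s in Ioc a b, κ (t - s)) * B := by rw [integral_mul_const]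
      _ = B * ∫ u in Ioc (t - b) (t - a), κ u := by rw [hκcov hab, mul_comm]
  -- monotonicity of kernel integrals
  have hκmono : ∀ {a b a' b' : ℝ}, 0 ≤ a' → b' ≤ T → Ioc a b ⊆ Ioc a' b' →
      (∫ s in Ioc a b, κ s) ≤ ∫ s in Ioc a' b', κ s := by
    intro a b a' b' h0 hb hsub
    exact setIntegral_mono_set
      (hκ.mono_set (fun x hx => ⟨le_trans h0 hx.1.le, le_trans hx.2 hb⟩))
      (ae_of_all _ hκ0) (HasSubset.Subset.eventuallyLE hsub)
  -- the key induction
  have key : ∀ (n k : ℕ), ∀ t ∈ Icc (0:ℝ) T, t ≤ ((k:ℝ) + 1) * δ → f n t ≤ M * g n (k+1) := by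
    intro n
    induction n with
    | zero =>
      intro k t ht _
      have hg1 : g 0 (k+1) = 1 := by
        simp only [hgdef, pow_zero, one_mul]
        rw [Finset.sum_eq_single 0]
        · simp
        · intro j _ hj0
          rw [Nat.choose_eq_zero_of_lt (Nat.pos_of_ne_zero hj0)]
          simp
        · simp
      rw [hg1, mul_one]; exact hM t ht
    | succ n ih =>
      intro k t ht htk
      have hrec' := hrec (n+1) (Nat.le_add_left 1 n) t ht
      rw [Nat.add_sub_cancel] at hrec'
      by_cases hcase : t ≤ δ
      · -- small t
        have hBnn : 0 ≤ M * g n (k+1) := mul_nonneg hM0 (hg0 _ _)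
        have hb := hconv (t := t) (a := 0) (b := t) (B := M * g n (k+1)) (m := n)
          le_rfl ht.1 le_rfl ht.2 hBnn
          (fun s hs => ih k s ⟨hs.1.le, le_trans hs.2 ht.2⟩ (le_trans hs.2 htk))
        have hI : (∫ u in Ioc (t - t) (t - 0), κ u) ≤ 1 / (2*C) := by
          rw [sub_self, sub_zero]
          exact le_trans (hκmono le_rfl hδT (Ioc_subset_Ioc le_rfl hcase)) hδ
        have hstep : f (n+1) t ≤ C * ((M * g n (k+1)) * (1/(2*C))) := by
          refine le_trans hrec' (mul_le_mul_of_nonneg_left ?_ hC.le)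
          exact le_trans hb (mul_le_mul_of_nonneg_left hI hBnn)
        have heq : C * ((M * g n (k+1)) * (1/(2*C))) = (1/2) * (M * g n (k+1)) := by
          field_simp
        rw [hgrec n k]
        have hpos : 0 ≤ M * (A * g n k) :=
          mul_nonneg hM0 (mul_nonneg hA0 (hg0 n k))
        calc f (n+1) t ≤ (1/2) * (M * g n (k+1)) := heq ▸ hstep
          _ ≤ M * (A * g n k + 1/2 * g n (k+1)) := by nlinarith
      · -- δ < t
        push_neg at hcase
        obtain ⟨k', rfl⟩ : ∃ k', k = k' + 1 := by
          cases k with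
          | zero =>
            exfalso
            simp only [Nat.cast_zero, zero_add, one_mul] at htk
            linarith
          | succ k' => exact ⟨k', rfl⟩
        push_cast at htk
        have h0tδ : 0 ≤ t - δ := by linarith
        set B₁ : ℝ := M * g n (k'+1) with hB₁def
        set B₂ : ℝ := M * g n (k'+2) with hB₂def
        have hB₁0 : 0 ≤ B₁ := mul_nonneg hM0 (hg0 _ _)
        have hB₂0 : 0 ≤ B₂ := mul_nonneg hM0 (hg0 _ _)
        have hfB₁ : ∀ s ∈ Ioc (0:ℝ) (t - δ), f n s ≤ B₁ := by
          intro s hs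
          exact ih k' s ⟨hs.1.le, by linarith [hs.2, ht.2]⟩ (by push_cast; linarith [hs.2])
        have hfB₂ : ∀ s ∈ Ioc (t - δ) t, f n s ≤ B₂ := by
          intro s hs
          refine ih (k'+1) s ⟨by linarith [hs.1], le_trans hs.2 ht.2⟩ ?_
          push_cast
          linarith [hs.2]
        have hsplit : (∫ s in Ioc (0:ℝ) t, κ (t-s) * f n s)
            = (∫ s in Ioc (0:ℝ) (t-δ), κ (t-s) * f n s)
              + ∫ s in Ioc (t-δ) t, κ (t-s) * f n s := by
          rw [← setIntegral_union (Set.Ioc_disjoint_Ioc_of_le le_rfl) measurableSet_Ioc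
            (hXint le_rfl h0tδ (by linarith) ht.2 hfB₁)
            (hXint h0tδ (by linarith) le_rfl ht.2 hfB₂),
            Set.Ioc_union_Ioc_eq_Ioc h0tδ (by linarith)]
        have hI₁ : (∫ s in Ioc (0:ℝ) (t-δ), κ (t-s) * f n s) ≤ B₁ * Iκ := by
          refine le_trans (hconv le_rfl h0tδ (by linarith) ht.2 hB₁0 hfB₁) ?_
          have : (∫ u in Ioc (t - (t - δ)) (t - 0), κ u) ≤ Iκ := by
            rw [sub_sub_cancel, sub_zero]
            exact hκmono le_rfl le_rfl (Ioc_subset_Ioc hδpos.le ht.2)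
          exact mul_le_mul_of_nonneg_left this hB₁0
        have hI₂ : (∫ s in Ioc (t-δ) t, κ (t-s) * f n s) ≤ B₂ * (1/(2*C)) := by
          refine le_trans (hconv h0tδ (by linarith) le_rfl ht.2 hB₂0 hfB₂) ?_
          have : (∫ u in Ioc (t - t) (t - (t - δ)), κ u) ≤ 1/(2*C) := by
            rw [sub_self, sub_sub_cancel]
            exact hδ
          exact mul_le_mul_of_nonneg_left this hB₂0
        rw [hgrec n (k'+1)]
        calc f (n+1) t ≤ C * (B₁ * Iκ + B₂ * (1/(2*C))) := by
              refine le_trans hrec' (mul_le_mul_of_nonneg_left ?_ hC.le)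
              rw [hsplit]
              exact add_le_add hI₁ hI₂
          _ = M * (A * g n (k'+1) + 1/2 * g n (k'+1+1)) := by
              rw [hAdef, hB₁def, hB₂def]
              have h2 : (k' + 2 : ℕ) = (k' + 1 + 1 : ℕ) := rfl
              rw [h2]
              field_simp
  -- the global horizon
  set K : ℕ := ⌈T / δ⌉₊ with hKdef
  have hTK : T ≤ ((K:ℝ) + 1) * δ := by
    have h1 : T / δ ≤ (K:ℝ) := Nat.le_ceil _
    have h2 : T ≤ (K:ℝ) * δ := by
      rw [div_le_iff₀ hδpos] at h1
      linarith
    nlinarith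
  have hfn : ∀ n, ∀ t ∈ Icc (0:ℝ) T, f n t ≤ M * g n (K+1) :=
    fun n t ht => key n K t ht (le_trans ht.2 hTK)
  set D : ℝ := ((K:ℝ) + 1) * (2*A+1)^(K+1) with hDdef
  have hD0 : 0 ≤ D := by positivity
  have hgle : ∀ n : ℕ, g n (K+1) ≤ D * (((n:ℝ)+1)^(K+1) * (1/2)^n) := by
    intro n
    have hterm : ∀ j ∈ Finset.range (K+1),
        (n.choose j : ℝ) * (2*A)^j ≤ ((n:ℝ)+1)^(K+1) * (2*A+1)^(K+1) := by
      intro j hj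
      have hj' : j ≤ K+1 := by
        have := Finset.mem_range.1 hj
        omega
      have h1 : (n.choose j : ℝ) ≤ ((n:ℝ))^j := by exact_mod_cast Nat.choose_le_pow n j
      have h2 : ((n:ℝ))^j ≤ ((n:ℝ)+1)^(K+1) := by
        calc ((n:ℝ))^j ≤ ((n:ℝ)+1)^j := by
              apply pow_le_pow_left₀ (Nat.cast_nonneg n) (by linarith)
          _ ≤ ((n:ℝ)+1)^(K+1) := by
              apply pow_le_pow_right₀ (by linarith [Nat.cast_nonneg (α := ℝ) n]) hj'
      have h3 : (2*A)^j ≤ (2*A+1)^(K+1) := by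
        calc (2*A)^j ≤ (2*A+1)^j := by
              apply pow_le_pow_left₀ (by linarith) (by linarith)
          _ ≤ (2*A+1)^(K+1) := by
              apply pow_le_pow_right₀ (by linarith) hj'
      exact mul_le_mul (h1.trans h2) h3 (by positivity) (by positivity)
    have hsum := Finset.sum_le_card_nsmul (Finset.range (K+1)) _ _ hterm
    rw [Finset.card_range, nsmul_eq_mul] at hsum
    have h12 : (0:ℝ) ≤ (1/2:ℝ)^n := by positivity
    have hfin := mul_le_mul_of_nonneg_left hsum h12
    simp only [hgdef]
    refine le_trans hfin (le_of_eq ?_)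
    rw [hDdef]
    push_cast
    ring
  -- core summability
  have hcore : ∀ r : ℝ, 0 ≤ r → r < 1 →
      Summable (fun n : ℕ => ((n:ℝ)+1)^(K+1) * r^n) := by
    intro r hr0 hr1
    have hnorm : ‖r‖ < 1 := by rwa [Real.norm_eq_abs, abs_of_nonneg hr0]
    have heq : (fun n : ℕ => ((n:ℝ)+1)^(K+1) * r^n)
        = fun n : ℕ => ∑ i ∈ Finset.range (K+2),
            ((K+1).choose i : ℝ) * ((n:ℝ)^i * r^n) := by
      funext n
      rw [add_pow, Finset.sum_mul]
      apply Finset.sum_congr rfl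
      intro i _
      rw [one_pow]
      ring
    rw [heq]
    apply summable_sum
    intro i _
    exact (summable_pow_mul_geometric_of_norm_lt_one i hnorm).mul_left _
  -- main summability statement
  have hsummain : ∀ p : ℝ, 1 ≤ p →
      Summable (fun n : ℕ => ⨆ t : Icc (0:ℝ) T, (f n t.1) ^ (1/p)) := by
    intro p hp
    have hp0 : (0:ℝ) < p := lt_of_lt_of_le one_pos hp
    have hp1 : (0:ℝ) < 1/p := by positivity
    set r : ℝ := (1/2:ℝ) ^ ((1:ℝ)/p) with hrdef
    have hr0 : 0 ≤ r := Real.rpow_nonneg (by norm_num) _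
    have hr1 : r < 1 := Real.rpow_lt_one (by norm_num) (by norm_num) hp1
    have hb : ∀ n : ℕ, (⨆ t : Icc (0:ℝ) T, (f n t.1) ^ (1/p))
        ≤ ((M * D) ^ ((1:ℝ)/p)) * (((n:ℝ)+1)^(K+1) * r^n) := by
      intro n
      apply Real.iSup_le
      · intro t
        have h1 : f n t.1 ≤ M * g n (K+1) := hfn n t.1 t.2
        have h2 : M * g n (K+1) ≤ (M*D) * (((n:ℝ)+1)^(K+1) * (1/2)^n) := by
          calc M * g n (K+1) ≤ M * (D * (((n:ℝ)+1)^(K+1) * (1/2)^n)) :=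
                mul_le_mul_of_nonneg_left (hgle n) hM0
            _ = (M*D) * (((n:ℝ)+1)^(K+1) * (1/2)^n) := by ring
        have h3 : (f n t.1) ^ (1/p) ≤ ((M*D) * (((n:ℝ)+1)^(K+1) * (1/2)^n)) ^ ((1:ℝ)/p) :=
          Real.rpow_le_rpow (hf0 n t.1 t.2) (h1.trans h2) hp1.le
        refine h3.trans ?_
        rw [Real.mul_rpow (mul_nonneg hM0 hD0)
              (by positivity : (0:ℝ) ≤ ((n:ℝ)+1)^(K+1) * (1/2)^n),
            Real.mul_rpow (by positivity : (0:ℝ) ≤ ((n:ℝ)+1)^(K+1))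
              (by positivity : (0:ℝ) ≤ ((1/2:ℝ))^n)]
        apply mul_le_mul_of_nonneg_left _ (Real.rpow_nonneg (mul_nonneg hM0 hD0) _)
        have e1 : (((1/2:ℝ))^n) ^ ((1:ℝ)/p) = r ^ n := by
          rw [← Real.rpow_natCast (1/2:ℝ) n, ← Real.rpow_mul (by norm_num),
            mul_comm ((n:ℝ)) ((1:ℝ)/p), Real.rpow_mul (by norm_num), Real.rpow_natCast]
        rw [e1]
        apply mul_le_mul_of_nonneg_right _ (pow_nonneg hr0 n)
        have hbase : (1:ℝ) ≤ ((n:ℝ)+1)^(K+1) :=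
          one_le_pow₀ (by linarith [Nat.cast_nonneg (α := ℝ) n] : (1:ℝ) ≤ (n:ℝ)+1)
        calc (((n:ℝ)+1)^(K+1)) ^ ((1:ℝ)/p)
            ≤ (((n:ℝ)+1)^(K+1)) ^ (1:ℝ) := by
              apply Real.rpow_le_rpow_of_exponent_le hbase
              rw [div_le_one hp0]
              exact hp
          _ = ((n:ℝ)+1)^(K+1) := Real.rpow_one _
      · positivity
    have hmaj : Summable (fun n : ℕ => ((M * D) ^ ((1:ℝ)/p)) * (((n:ℝ)+1)^(K+1) * r^n)) :=
      (hcore r hr0 hr1).mul_left _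
    exact Summable.of_nonneg_of_le
      (fun n => Real.iSup_nonneg (fun t => Real.rpow_nonneg (hf0 n t.1 t.2) _)) hb hmaj
  intro p hp
  refine ⟨hsummain p hp, ?_⟩
  have h1 := (hsummain 1 le_rfl).tendsto_atTop_zero
  have heq2 : (fun n : ℕ => ⨆ t : Icc (0:ℝ) T, (f n t.1) ^ (1/(1:ℝ)))
      = fun n : ℕ => ⨆ t : Icc (0:ℝ) T, f n t.1 := by
    funext n
    congr 1
    funext t
    norm_num
  exact heq2 ▸ h1
end
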